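/- arXiv:2411.01713 — 2 statements merged into one kernel-verified Lean document; each statement's English description precedes it below -/
import Mathlib

section
/- Let E be a real inner product space, let f : E → ℝ be differentiable with gradient that is Lipschitz with constant L > 0, and fix θ ∈ E. Let g be a square-integrable E-valued random variable on a probability space with E[g] = ∇f(θ), and let η be a step size with 0 ≤ η ≤ 2/L. Then the SGD step θ' = θ − η g satisfies E[f(θ')] − f(θ) ≤ −η(1 − ηL/2)·‖∇f(θ)‖² + (η²L/2)·Var(g), where Var(g) := E[‖g − E[g]‖²]. -/
open MeasureTheory
open scoped RealInnerProductSpace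
open intervalIntegral

lemma sgd_smooth_abs_bound {E : Type*} [NormedAddCommGroup E] [InnerProductSpace ℝ E]
    [CompleteSpace E] (f : E → ℝ) (hf : Differentiable ℝ f) (L : ℝ) (hL : 0 < L)
    (hLip : LipschitzWith (Real.toNNReal L) (fun x => gradient f x)) (x y : E) :
    |f y - f x - ⟪gradient f x, y - x⟫| ≤ L / 2 * ‖y - x‖ ^ 2 := by
  set v := y - x with hv
  have hline : ∀ t : ℝ, HasDerivAt (fun t : ℝ => x + t • v) v t := fun t => by
    simpa using ((hasDerivAt_id t).smul_const v).const_add x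
  have hderiv : ∀ t : ℝ,
      HasDerivAt (fun t : ℝ => f (x + t • v)) ⟪gradient f (x + t • v), v⟫ t := by
    intro t
    have h1 := (hf (x + t • v)).hasGradientAt.hasFDerivAt
    have := h1.comp_hasDerivAt t (hline t)
    simpa [InnerProductSpace.toDual_apply_apply, Function.comp_def] using this
  have hgcont : Continuous fun t : ℝ => gradient f (x + t • v) :=
    hLip.continuous.comp (by continuity)
  have hcont : Continuous fun t : ℝ => ⟪gradient f (x + t • v), v⟫ :=
    hgcont.inner continuous_const
  have hFTC : ∫ t in (0:ℝ)..1, ⟪gradient f (x + t • v), v⟫ = f y - f x := by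
    have := integral_eq_sub_of_hasDerivAt (f := fun t : ℝ => f (x + t • v))
      (f' := fun t : ℝ => ⟪gradient f (x + t • v), v⟫)
      (fun t _ => hderiv t) (hcont.intervalIntegrable 0 1)
    simpa [hv] using this
  have hbound : ∀ t ∈ Set.Icc (0:ℝ) 1,
      |⟪gradient f (x + t • v), v⟫ - ⟪gradient f x, v⟫| ≤ L * ‖v‖ ^ 2 * t := by
    intro t ht
    have h1 : ⟪gradient f (x + t • v), v⟫ - ⟪gradient f x, v⟫
        = ⟪gradient f (x + t • v) - gradient f x, v⟫ := by
      rw [inner_sub_left]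
    rw [h1]
    calc |⟪gradient f (x + t • v) - gradient f x, v⟫|
        ≤ ‖gradient f (x + t • v) - gradient f x‖ * ‖v‖ := abs_real_inner_le_norm _ _
      _ ≤ (L * ‖t • v‖) * ‖v‖ := by
          have := hLip.dist_le_mul (x + t • v) x
          simp only [dist_eq_norm] at this
          have h2 : x + t • v - x = t • v := by abel
          rw [h2] at this
          have hLnn : (Real.toNNReal L : ℝ) = L := Real.coe_toNNReal L hL.le
          rw [hLnn] at this
          exact mul_le_mul_of_nonneg_right this (norm_nonneg v)
      _ ≤ L * ‖v‖ ^ 2 * t := by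
          rw [norm_smul, Real.norm_eq_abs, abs_of_nonneg ht.1]
          ring_nf
          nlinarith [norm_nonneg v, ht.1]
  have hi1 : IntervalIntegrable (fun t => ⟪gradient f (x + t • v), v⟫ - ⟪gradient f x, v⟫)
      MeasureTheory.volume 0 1 := (hcont.sub continuous_const).intervalIntegrable 0 1
  have hi2 : IntervalIntegrable (fun t : ℝ => L * ‖v‖ ^ 2 * t)
      MeasureTheory.volume 0 1 := (continuous_const.mul continuous_id).intervalIntegrable 0 1
  have hInt2 : ∫ t in (0:ℝ)..1, (⟪gradient f (x + t • v), v⟫ - ⟪gradient f x, v⟫)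
      ≤ ∫ t in (0:ℝ)..1, L * ‖v‖ ^ 2 * t :=
    integral_mono_on zero_le_one hi1 hi2 fun t ht => (abs_le.mp (hbound t ht)).2
  have hInt3 : ∫ t in (0:ℝ)..1, (-(L * ‖v‖ ^ 2 * t))
      ≤ ∫ t in (0:ℝ)..1, (⟪gradient f (x + t • v), v⟫ - ⟪gradient f x, v⟫) :=
    integral_mono_on zero_le_one hi2.neg hi1 fun t ht => by
      simpa using (abs_le.mp (hbound t ht)).1
  have hleft : ∫ t in (0:ℝ)..1, (⟪gradient f (x + t • v), v⟫ - ⟪gradient f x, v⟫)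
      = f y - f x - ⟪gradient f x, v⟫ := by
    rw [integral_sub (hcont.intervalIntegrable 0 1)
      (continuous_const.intervalIntegrable 0 1), hFTC]
    simp
  have hright : ∫ t in (0:ℝ)..1, L * ‖v‖ ^ 2 * t = L / 2 * ‖v‖ ^ 2 := by
    rw [intervalIntegral.integral_const_mul, integral_id]
    ring
  have hright' : ∫ t in (0:ℝ)..1, (-(L * ‖v‖ ^ 2 * t)) = -(L / 2 * ‖v‖ ^ 2) := by
    rw [intervalIntegral.integral_neg, hright]
  rw [hleft, hright] at hInt2
  rw [hleft, hright'] at hInt3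
  rw [abs_le]
  exact ⟨by linarith, hInt2⟩

/-- Descent lemma for SGD (Lemma 1): if `f : E → ℝ` is differentiable with `L`-Lipschitz
gradient, `g` is a square-integrable random variable with mean `∇f(θ)`, and
`0 ≤ η ≤ 2/L`, then the SGD step `θ' = θ − η g` satisfies
`E[f(θ')] − f(θ) ≤ −η(1 − ηL/2)·‖∇f(θ)‖² + (η²L/2)·Var(g)`,
where `Var(g) = E[‖g − E[g]‖²]`. -/
theorem sgd_descent_lemma {E : Type*} [NormedAddCommGroup E] [InnerProductSpace ℝ E]
    [CompleteSpace E]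
    {Ω : Type*} [MeasurableSpace Ω] {μ : Measure Ω} [IsProbabilityMeasure μ]
    (f : E → ℝ) (hf : Differentiable ℝ f) (L : ℝ) (hL : 0 < L)
    (hLip : LipschitzWith (Real.toNNReal L) (fun x => gradient f x))
    (θ : E) (g : Ω → E) (hg : MemLp g 2 μ)
    (hmean : (∫ ω, g ω ∂μ) = gradient f θ)
    (η : ℝ) (hη0 : 0 ≤ η) (hη2 : η ≤ 2 / L) :
    (∫ ω, f (θ - η • g ω) ∂μ) - f θ ≤
      -η * (1 - η * L / 2) * ‖gradient f θ‖ ^ 2 +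
        (η ^ 2 * L / 2) * ∫ ω, ‖g ω - ∫ ω', g ω' ∂μ‖ ^ 2 ∂μ := by
  set m := gradient f θ with hm
  -- pointwise bound
  have hpt : ∀ ω, |f (θ - η • g ω) - f θ + η * ⟪m, g ω⟫| ≤ L / 2 * η ^ 2 * ‖g ω‖ ^ 2 := by
    intro ω
    have := sgd_smooth_abs_bound f hf L hL hLip θ (θ - η • g ω)
    have h1 : θ - η • g ω - θ = -(η • g ω) := by abel
    rw [h1] at this
    have h2 : ⟪m, -(η • g ω)⟫ = -(η * ⟪m, g ω⟫) := by
      rw [inner_neg_right, inner_smul_right]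
    rw [h2] at this
    have h3 : ‖-(η • g ω)‖ ^ 2 = η ^ 2 * ‖g ω‖ ^ 2 := by
      rw [norm_neg, norm_smul, Real.norm_eq_abs, mul_pow, sq_abs]
    rw [h3, sub_neg_eq_add, ← mul_assoc] at this
    exact this
  -- integrability facts
  have hgi : Integrable g μ := hg.integrable one_le_two
  have hinner : Integrable (fun ω => ⟪m, g ω⟫) μ := hgi.const_inner m
  have hnormsq : Integrable (fun ω => ‖g ω‖ ^ 2) μ := by
    have := hg.integrable_norm_rpow (by norm_num) (by norm_num)
    simpa [ENNReal.toReal_ofNat, Real.rpow_natCast] using this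
  have hgm : MemLp (fun ω => g ω - m) 2 μ := hg.sub (memLp_const m)
  have hnormsq2 : Integrable (fun ω => ‖g ω - m‖ ^ 2) μ := by
    have := hgm.integrable_norm_rpow (by norm_num) (by norm_num)
    simpa [ENNReal.toReal_ofNat, Real.rpow_natCast] using this
  have hgmi : Integrable (fun ω => g ω - m) μ := hgi.sub (integrable_const m)
  -- integrability of f ∘ step
  have hmeas : AEStronglyMeasurable (fun ω => f (θ - η • g ω)) μ :=
    hf.continuous.comp_aestronglyMeasurable
      (aestronglyMeasurable_const.sub (hg.1.const_smul η))
  have hfi : Integrable (fun ω => f (θ - η • g ω)) μ := by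
    refine Integrable.mono' (g := fun ω => |f θ| + η * ‖m‖ * ‖g ω‖ + L / 2 * η ^ 2 * ‖g ω‖ ^ 2)
      ?_ hmeas (Filter.Eventually.of_forall fun ω => ?_)
    · exact ((integrable_const _).add ((hgi.norm.const_mul _))).add (hnormsq.const_mul _)
    · have h1 := hpt ω
      have h2 : |η * ⟪m, g ω⟫| ≤ η * ‖m‖ * ‖g ω‖ := by
        rw [abs_mul, abs_of_nonneg hη0, mul_assoc]
        exact mul_le_mul_of_nonneg_left (abs_real_inner_le_norm m (g ω)) hη0
      have := abs_sub_abs_le_abs_sub (f (θ - η • g ω)) (f θ - η * ⟪m, g ω⟫)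
      rw [Real.norm_eq_abs]
      have h3 : f (θ - η • g ω) - (f θ - η * ⟪m, g ω⟫)
          = f (θ - η • g ω) - f θ + η * ⟪m, g ω⟫ := by ring
      rw [h3] at this
      have h4 : |f θ - η * ⟪m, g ω⟫| ≤ |f θ| + η * ‖m‖ * ‖g ω‖ :=
        (abs_sub _ _).trans (by linarith)
      linarith
  -- main inequality on integrals
  have hub : Integrable (fun ω => f θ - η * ⟪m, g ω⟫ + L / 2 * η ^ 2 * ‖g ω‖ ^ 2) μ :=
    ((integrable_const _).sub (hinner.const_mul η)).add (hnormsq.const_mul _)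
  have hle : (∫ ω, f (θ - η • g ω) ∂μ)
      ≤ ∫ ω, (f θ - η * ⟪m, g ω⟫ + L / 2 * η ^ 2 * ‖g ω‖ ^ 2) ∂μ := by
    refine integral_mono hfi hub fun ω => ?_
    have := (abs_le.mp (hpt ω)).2
    linarith
  have hIinner : ∫ ω, ⟪m, g ω⟫ ∂μ = ‖m‖ ^ 2 := by
    rw [integral_inner hgi, hmean, real_inner_self_eq_norm_sq]
  have hIzero : ∫ ω, ⟪m, g ω - m⟫ ∂μ = 0 := by
    rw [integral_inner hgmi, integral_sub hgi (integrable_const m), hmean]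
    simp
  have hB2 : Integrable (fun ω => 2 * ⟪m, g ω - m⟫) μ := (hgmi.const_inner m).const_mul 2
  have hAB : Integrable (fun ω => ‖g ω - m‖ ^ 2 + 2 * ⟪m, g ω - m⟫) μ := hnormsq2.add hB2
  have hvar : ∫ ω, ‖g ω‖ ^ 2 ∂μ = (∫ ω, ‖g ω - m‖ ^ 2 ∂μ) + ‖m‖ ^ 2 := by
    have hpw : ∀ ω, ‖g ω‖ ^ 2 = ‖g ω - m‖ ^ 2 + 2 * ⟪m, g ω - m⟫ + ‖m‖ ^ 2 := by
      intro ω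
      have := norm_add_sq_real (g ω - m) m
      rw [sub_add_cancel, real_inner_comm] at this
      linarith
    calc ∫ ω, ‖g ω‖ ^ 2 ∂μ
        = ∫ ω, (‖g ω - m‖ ^ 2 + 2 * ⟪m, g ω - m⟫ + ‖m‖ ^ 2) ∂μ := by
          exact integral_congr_ae (Filter.Eventually.of_forall hpw)
      _ = (∫ ω, ‖g ω - m‖ ^ 2 ∂μ) + 2 * (∫ ω, ⟪m, g ω - m⟫ ∂μ) + ‖m‖ ^ 2 := by
          rw [integral_add hAB (integrable_const _),
            integral_add hnormsq2 hB2, MeasureTheory.integral_const_mul _, MeasureTheory.integral_const]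
          simp
      _ = (∫ ω, ‖g ω - m‖ ^ 2 ∂μ) + ‖m‖ ^ 2 := by rw [hIzero]; ring
  have hC1 : Integrable (fun ω => f θ - η * ⟪m, g ω⟫) μ :=
    (integrable_const _).sub (hinner.const_mul η)
  have hC2 : Integrable (fun ω => η * ⟪m, g ω⟫) μ := hinner.const_mul η
  have hC3 : Integrable (fun ω => L / 2 * η ^ 2 * ‖g ω‖ ^ 2) μ := hnormsq.const_mul _
  have hRHS : ∫ ω, (f θ - η * ⟪m, g ω⟫ + L / 2 * η ^ 2 * ‖g ω‖ ^ 2) ∂μ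
      = f θ - η * ‖m‖ ^ 2 + L / 2 * η ^ 2 * ((∫ ω, ‖g ω - m‖ ^ 2 ∂μ) + ‖m‖ ^ 2) := by
    rw [integral_add hC1 hC3, integral_sub (integrable_const _) hC2,
      MeasureTheory.integral_const_mul _, MeasureTheory.integral_const_mul _, MeasureTheory.integral_const, hIinner, hvar]
    simp
  rw [hRHS] at hle
  have hkey : -η * (1 - η * L / 2) * ‖m‖ ^ 2 + η ^ 2 * L / 2 * (∫ ω, ‖g ω - m‖ ^ 2 ∂μ)
      = (f θ - η * ‖m‖ ^ 2 + L / 2 * η ^ 2 * ((∫ ω, ‖g ω - m‖ ^ 2 ∂μ) + ‖m‖ ^ 2)) - f θ := by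
    ring
  rw [hmean]
  linarith
end

section
/- Let E be a real inner product space, θ₀, θ̃_t, θ_{t−1} ∈ E, with γ_t := ‖θ̃_t − θ₀‖ > 0 and γ_{t−1} := ‖θ_{t−1} − θ₀‖, and deviation ratio r_t := max{0, γ_t − γ_{t−1}} / γ_t. If λ > 1, γ_t > γ_{t−1}, and λ r_t ≤ 1, then the SPD update θ_t = θ̃_t − λ r_t·(θ̃_t − θ₀) satisfies 0 ≤ ‖θ_t − θ₀‖ < γ_{t−1}. -/
/-- Strong-regularization regime of SPD: if `λ > 1`, `γ_t > γ_{t−1}`, and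
`λ r_t ≤ 1`, then the SPD update `θ_t = θ̃_t − λ r_t·(θ̃_t − θ₀)` satisfies
`0 ≤ ‖θ_t − θ₀‖ < γ_{t−1}`. -/
theorem spd_strong_regularization {E : Type*} [NormedAddCommGroup E]
    [InnerProductSpace ℝ E] (θ₀ θtilde θprev θt : E)
    (γt γprev rt lam : ℝ)
    (hγt : γt = ‖θtilde - θ₀‖) (hγprev : γprev = ‖θprev - θ₀‖)
    (hγtpos : 0 < γt)
    (hrt : rt = max 0 (γt - γprev) / γt)
    (hlam : 1 < lam) (hγ : γprev < γt) (hlr : lam * rt ≤ 1)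
    (hθt : θt = θtilde - (lam * rt) • (θtilde - θ₀)) :
    0 ≤ ‖θt - θ₀‖ ∧ ‖θt - θ₀‖ < γprev := by
  have hr : rt = (γt - γprev) / γt := by
    rw [hrt, max_eq_right (by linarith)]
  have hrpos : 0 < rt := by
    rw [hr]; exact div_pos (by linarith) hγtpos
  have hdiff : θt - θ₀ = (1 - lam * rt) • (θtilde - θ₀) := by
    rw [hθt, sub_smul, one_smul]; abel
  have hnorm : ‖θt - θ₀‖ = (1 - lam * rt) * γt := by
    rw [hdiff, norm_smul, Real.norm_eq_abs, abs_of_nonneg (by linarith), hγt]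
  refine ⟨norm_nonneg _, ?_⟩
  rw [hnorm]
  have h1 : lam * rt > rt := by nlinarith
  have h2 : (1 - rt) * γt = γprev := by
    rw [hr]; field_simp; ring
  nlinarith
end
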